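/- If 2/j ∈ F_m (so j is odd, j ≤ m), then the immediate predecessor of 2/j in F_m is (⌈2m/j⌉-1) / ((j(⌈2m/j⌉-1)+1)/2) when ⌈2m/j⌉ is even, and (⌈2m/j⌉-2) / ((j(⌈2m/j⌉-2)+1)/2) when ⌈2m/j⌉ is odd. -/

import Mathlib

/-- The Farey sequence of order `m`: rationals in `[0,1]` with denominator at most `m`. -/
def Farey (m : ℕ) : Set ℚ := {q | 0 ≤ q ∧ q ≤ 1 ∧ q.den ≤ m}

/-- If `2/j ∈ F_m` (`j` odd, `2 < j ≤ m`), then the immediate predecessor of `2/j`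
in `F_m` is `(⌈2m/j⌉-1)/((j(⌈2m/j⌉-1)+1)/2)` when `⌈2m/j⌉` is even, and
`(⌈2m/j⌉-2)/((j(⌈2m/j⌉-2)+1)/2)` when `⌈2m/j⌉` is odd. -/
theorem farey_pred_two_div (m j : ℕ) (hm : 1 < m) (hj : 2 < j) (hjm : j ≤ m)
    (hodd : Odd j) :
    (let c : ℤ := ⌈(2 * (m : ℚ)) / j⌉
     let p : ℚ := if Even c then ((c : ℚ) - 1) / (((j : ℚ) * ((c : ℚ) - 1) + 1) / 2)
                  else ((c : ℚ) - 2) / (((j : ℚ) * ((c : ℚ) - 2) + 1) / 2)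
     p ∈ Farey m ∧ p < 2 / (j : ℚ) ∧
       ∀ r ∈ Farey m, r < 2 / (j : ℚ) → r ≤ p) := by
  intro c p
  have hj0 : 0 < j := by omega
  have hjq : (0:ℚ) < j := by exact_mod_cast hj0
  have hjz : (3:ℤ) ≤ (j:ℤ) := by exact_mod_cast hj
  have hmz : (j:ℤ) ≤ (m:ℤ) := by exact_mod_cast hjm
  have hoddj : Odd (j:ℤ) := by exact_mod_cast hodd
  have h1 : (2*(m:ℚ))/j ≤ (c:ℚ) := Int.le_ceil _
  have h2 : (c:ℚ) < (2*(m:ℚ))/j + 1 := Int.ceil_lt_add_one _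
  have hjc : 2*(m:ℤ) ≤ c*(j:ℤ) := by
    rw [div_le_iff₀ hjq] at h1
    exact_mod_cast h1
  have hjc1 : (c-1)*(j:ℤ) < 2*(m:ℤ) := by
    have h3 : (c:ℚ) - 1 < (2*(m:ℚ))/j := by linarith
    rw [lt_div_iff₀ hjq] at h3
    exact_mod_cast h3
  have hc2 : (2:ℤ) ≤ c := by
    have h4 : (2:ℚ) ≤ (2*(m:ℚ))/j := by
      rw [le_div_iff₀ hjq]
      have : (j:ℚ) ≤ (m:ℚ) := by exact_mod_cast hjm
      linarith
    have : (2:ℚ) ≤ (c:ℚ) := le_trans h4 h1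
    exact_mod_cast this
  obtain ⟨a, ha_odd, ha1, haub, halb, hpa⟩ :
      ∃ a : ℤ, Odd a ∧ 1 ≤ a ∧ a*(j:ℤ) < 2*(m:ℤ) ∧ 2*(m:ℤ) ≤ (a+2)*(j:ℤ) ∧
        p = ((a:ℚ)) / (((j:ℚ)*(a:ℚ)+1)/2) := by
    by_cases hc : Even c
    · refine ⟨c-1, hc.sub_odd odd_one, by omega, hjc1, ?_, ?_⟩
      · nlinarith
      · simp only [p, if_pos hc]
        push_cast
        ring_nf
    · have hco : Odd c := Int.not_even_iff_odd.mp hc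
      have hc3 : (3:ℤ) ≤ c := by
        rcases hco with ⟨k, hk⟩; omega
      refine ⟨c-2, hco.sub_even even_two, by omega, ?_, ?_, ?_⟩
      · nlinarith
      · nlinarith
      · simp only [p, if_neg hc]
        push_cast
        ring_nf
  obtain ⟨k, hk⟩ := ha_odd.mul hoddj
  set b : ℤ := k + 1 with hbdef
  have hb : 2*b = a*(j:ℤ) + 1 := by omega
  have hb1 : (1:ℤ) ≤ b := by nlinarith
  have hbm : b ≤ (m:ℤ) := by omega
  have hbj : (m:ℤ) < b + (j:ℤ) := by nlinarith
  have hbq0 : (0:ℚ) < (b:ℚ) := by exact_mod_cast hb1.trans_lt' (by norm_num)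
  have hb' : (j:ℚ)*(a:ℚ) + 1 = 2*(b:ℚ) := by
    have h6 : ((a*(j:ℤ)+1 : ℤ):ℚ) = ((2*b : ℤ):ℚ) := by exact_mod_cast hb.symm
    push_cast at h6
    linarith
  have hp : p = (a:ℚ)/(b:ℚ) := by
    rw [hpa, hb']
    congr 1
    ring
  have haq : (0:ℚ) < (a:ℚ) := by exact_mod_cast ha1.trans_lt' (by norm_num)
  refine ⟨⟨?_, ?_, ?_⟩, ?_, ?_⟩
  · rw [hp]; positivity
  · rw [hp, div_le_one hbq0]
    have h7 : 2*a ≤ 2*b := by nlinarith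
    have h5 : a ≤ b := by omega
    exact_mod_cast h5
  · rw [hp]
    have hd : (((a:ℚ)/(b:ℚ)).den : ℤ) ∣ b := by
      rw [← Rat.divInt_eq_div]
      exact Rat.den_dvd a b
    have h8 := Int.le_of_dvd (by omega) hd
    have h9 : (((a:ℚ)/(b:ℚ)).den : ℤ) ≤ (m:ℤ) := h8.trans hbm
    exact_mod_cast h9
  · rw [hp, div_lt_div_iff₀ hbq0 hjq]
    have h10 : (a:ℤ)*(j:ℤ) < 2*b := by omega
    exact_mod_cast h10
  · rintro r ⟨hr0, hr1, hrden⟩ hrlt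
    by_contra hcon
    push_neg at hcon
    set u : ℤ := r.num with hu
    set v : ℤ := (r.den : ℤ) with hv
    have hv0 : (0:ℤ) < v := by rw [hv]; exact_mod_cast r.pos
    have hvq : (0:ℚ) < (v:ℚ) := by exact_mod_cast hv0
    have hvm : v ≤ (m:ℤ) := by rw [hv]; exact_mod_cast hrden
    have hr : r = (u:ℚ)/(v:ℚ) := by rw [hu, hv]; exact_mod_cast (Rat.num_div_den r).symm
    have hA : u*(j:ℤ) + 1 ≤ 2*v := by
      rw [hr, div_lt_div_iff₀ hvq hjq] at hrlt
      have h11 : u*(j:ℤ) < 2*v := by exact_mod_cast hrlt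
      omega
    have hB : a*v + 1 ≤ u*b := by
      rw [hr, hp, div_lt_div_iff₀ hbq0 hvq] at hcon
      have h12 : a*v < u*b := by exact_mod_cast hcon
      omega
    have key : v = b*(2*v - u*(j:ℤ)) + (j:ℤ)*(u*b - a*v) := by linear_combination v * hk
    have e1 : b*1 ≤ b*(2*v - u*(j:ℤ)) := mul_le_mul_of_nonneg_left (by omega) (by omega)
    have e2 : (j:ℤ)*1 ≤ (j:ℤ)*(u*b - a*v) := mul_le_mul_of_nonneg_left (by omega) (by omega)
    omega
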